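/- Let A and D be real 2n×2n matrices such that Ã := −(A + Aᵀ) is positive definite and D is symmetric positive semidefinite, and let σ be a real symmetric positive semidefinite 2n×2n matrix satisfying Aσ + σAᵀ + D ≥ 0. Then the largest eigenvalue of σ satisfies λ₁↓ ≤ δ₁↓ / α₁↑, where α₁↑ is the smallest eigenvalue of Ã and δ₁↓ is the largest eigenvalue of D. -/

import Mathlib

open Matrix
open scoped ComplexOrder

open Classical in
/-- The eigenvalues of a matrix in increasing order (junk value `0` if not Hermitian). -/
noncomputable def eigUp {d : ℕ} (M : Matrix (Fin d) (Fin d) ℝ) : Fin d → ℝ :=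
  if h : M.IsHermitian then h.eigenvalues ∘ Tuple.sort h.eigenvalues else 0

/-- The eigenvalues of a matrix in decreasing order. -/
noncomputable def eigDown {d : ℕ} (M : Matrix (Fin d) (Fin d) ℝ) (j : Fin d) : ℝ :=
  eigUp M j.rev

/-- The standard symplectic form on `2n` canonical variables: block diagonal with
blocks `[[0,1],[-1,0]]`. -/
def Omega (n : ℕ) : Matrix (Fin (2*n)) (Fin (2*n)) ℝ :=
  Matrix.of fun i j =>
    if (i : ℕ) + 1 = (j : ℕ) ∧ (i : ℕ) % 2 = 0 then 1
    else if (j : ℕ) + 1 = (i : ℕ) ∧ (j : ℕ) % 2 = 0 then -1 else 0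

/-- Partial transposition matrix `T = 𝟙₂^{⊕ l} ⊕ σz^{⊕ (n-l)}` for the bipartition of the
first `l` versus the last `n - l` modes. -/
def Tmat (n l : ℕ) : Matrix (Fin (2*n)) (Fin (2*n)) ℝ :=
  Matrix.diagonal fun i => if (i : ℕ) / 2 < l ∨ (i : ℕ) % 2 = 0 then 1 else -1

/-- The partially transposed symplectic form `Ω̃ = T Ω T`. -/
def OmegaPT (n l : ℕ) : Matrix (Fin (2*n)) (Fin (2*n)) ℝ :=
  Tmat n l * Omega n * Tmat n l

open Classical in
/-- The positive square root of a positive semidefinite matrix (junk value `0` otherwise). -/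
noncomputable def msqrt {d : ℕ} (M : Matrix (Fin d) (Fin d) ℝ) : Matrix (Fin d) (Fin d) ℝ :=
  if h : M.PosSemidef then
    (h.1.eigenvectorUnitary : Matrix (Fin d) (Fin d) ℝ) *
      diagonal ((↑) ∘ (Real.sqrt ·) ∘ h.1.eigenvalues) *
      (star h.1.eigenvectorUnitary : Matrix (Fin d) (Fin d) ℝ)
  else 0

/-- `σ + iΩ ≥ 0`: the Robertson–Schrödinger condition for a real symmetric matrix `σ`
to be a bona fide covariance matrix. -/
def IsCM (n : ℕ) (σ : Matrix (Fin (2*n)) (Fin (2*n)) ℝ) : Prop :=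
  σ.IsSymm ∧
    (σ.map (Complex.ofReal ·) + Complex.I • (Omega n).map (Complex.ofReal ·)).PosSemidef

/-- `ν̃₋²`, the square of the smallest partially transposed symplectic eigenvalue of `σ`, for
the bipartition of the first `l` versus the remaining modes: the smallest eigenvalue of
`σ^{1/2} Ω̃ᵀ σ Ω̃ σ^{1/2}`. -/
noncomputable def nuSq (n l : ℕ) (σ : Matrix (Fin (2*n)) (Fin (2*n)) ℝ) : ℝ :=
  sInf (spectrum ℝ (msqrt σ * (OmegaPT n l)ᵀ * σ * OmegaPT n l * msqrt σ))

/-- `ν̃₋`, the smallest partially transposed symplectic eigenvalue of `σ`. -/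
noncomputable def nuMin (n l : ℕ) (σ : Matrix (Fin (2*n)) (Fin (2*n)) ℝ) : ℝ :=
  Real.sqrt (nuSq n l σ)

/-- The logarithmic negativity `E_N(σ) = max (0, −log₂ ν̃₋)`. -/
noncomputable def logNeg (n l : ℕ) (σ : Matrix (Fin (2*n)) (Fin (2*n)) ℝ) : ℝ :=
  max 0 (-(Real.logb 2 (nuMin n l σ)))


section Helpers

lemma eigUp_eq' {d : ℕ} {M : Matrix (Fin d) (Fin d) ℝ} (hM : M.IsHermitian) (j : Fin d) :
    eigUp M j = hM.eigenvalues (Tuple.sort hM.eigenvalues j) := by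
  rw [eigUp, dif_pos hM]; rfl

lemma herm_quad_le {d : ℕ} {M : Matrix (Fin d) (Fin d) ℝ} (hM : M.IsHermitian) {c : ℝ}
    (h : ∀ i, hM.eigenvalues i ≤ c) (x : Fin d → ℝ) :
    x ⬝ᵥ (M *ᵥ x) ≤ c * (x ⬝ᵥ x) := by
  set U : Matrix (Fin d) (Fin d) ℝ := (hM.eigenvectorUnitary : Matrix (Fin d) (Fin d) ℝ)
  have hU : U * star U = 1 := (Matrix.mem_unitaryGroup_iff).mp hM.eigenvectorUnitary.2
  have key : (c • (1 : Matrix (Fin d) (Fin d) ℝ) - M).PosSemidef := by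
    have hd : (Matrix.diagonal (fun i => c - hM.eigenvalues i)).PosSemidef :=
      Matrix.posSemidef_diagonal_iff.mpr fun i => sub_nonneg.mpr (h i)
    have h2 := hd.mul_mul_conjTranspose_same U
    have heq : U * Matrix.diagonal (fun i => c - hM.eigenvalues i) * Uᴴ
        = c • (1 : Matrix (Fin d) (Fin d) ℝ) - M := by
      have hspec := hM.spectral_theorem
      have hdd : Matrix.diagonal (fun i => c - hM.eigenvalues i)
          = c • (1 : Matrix (Fin d) (Fin d) ℝ)
            - Matrix.diagonal (RCLike.ofReal ∘ hM.eigenvalues) := by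
        ext i j
        by_cases hij : i = j <;>
          simp [Matrix.diagonal_apply, Matrix.one_apply, hij, RCLike.ofReal]
      rw [hdd, Matrix.mul_sub, Matrix.sub_mul, Matrix.mul_smul, mul_one, Matrix.smul_mul,
        ← Matrix.star_eq_conjTranspose, hU]
      rw [Unitary.conjStarAlgAut_apply] at hspec
      exact congrArg _ hspec.symm
    rw [heq] at h2
    exact h2
  have h3 := key.dotProduct_mulVec_nonneg x
  simp only [star_trivial, RCLike.re_to_real] at h3
  rw [Matrix.sub_mulVec, Matrix.smul_mulVec, Matrix.one_mulVec, dotProduct_sub,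
    dotProduct_smul, smul_eq_mul] at h3
  linarith

lemma herm_le_quad {d : ℕ} {M : Matrix (Fin d) (Fin d) ℝ} (hM : M.IsHermitian) {c : ℝ}
    (h : ∀ i, c ≤ hM.eigenvalues i) (x : Fin d → ℝ) :
    c * (x ⬝ᵥ x) ≤ x ⬝ᵥ (M *ᵥ x) := by
  set U : Matrix (Fin d) (Fin d) ℝ := (hM.eigenvectorUnitary : Matrix (Fin d) (Fin d) ℝ)
  have hU : U * star U = 1 := (Matrix.mem_unitaryGroup_iff).mp hM.eigenvectorUnitary.2
  have key : (M - c • (1 : Matrix (Fin d) (Fin d) ℝ)).PosSemidef := by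
    have hd : (Matrix.diagonal (fun i => hM.eigenvalues i - c)).PosSemidef :=
      Matrix.posSemidef_diagonal_iff.mpr fun i => sub_nonneg.mpr (h i)
    have h2 := hd.mul_mul_conjTranspose_same U
    have heq : U * Matrix.diagonal (fun i => hM.eigenvalues i - c) * Uᴴ
        = M - c • (1 : Matrix (Fin d) (Fin d) ℝ) := by
      have hspec := hM.spectral_theorem
      have hdd : Matrix.diagonal (fun i => hM.eigenvalues i - c)
          = Matrix.diagonal (RCLike.ofReal ∘ hM.eigenvalues)
            - c • (1 : Matrix (Fin d) (Fin d) ℝ) := by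
        ext i j
        by_cases hij : i = j <;>
          simp [Matrix.diagonal_apply, Matrix.one_apply, hij, RCLike.ofReal]
      rw [hdd, Matrix.mul_sub, Matrix.sub_mul, Matrix.mul_smul, mul_one, Matrix.smul_mul,
        ← Matrix.star_eq_conjTranspose, hU]
      rw [Unitary.conjStarAlgAut_apply] at hspec
      exact congrArg (· - c • (1 : Matrix (Fin d) (Fin d) ℝ)) hspec.symm
    rw [heq] at h2
    exact h2
  have h3 := key.dotProduct_mulVec_nonneg x
  simp only [star_trivial, RCLike.re_to_real] at h3
  rw [Matrix.sub_mulVec, Matrix.smul_mulVec, Matrix.one_mulVec, dotProduct_sub,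
    dotProduct_smul, smul_eq_mul] at h3
  linarith

lemma eigUp_zero_le {d : ℕ} {M : Matrix (Fin d) (Fin d) ℝ} (hM : M.IsHermitian)
    (h0 : 0 < d) (i : Fin d) : eigUp M ⟨0, h0⟩ ≤ hM.eigenvalues i := by
  rw [eigUp_eq' hM]
  set p := Tuple.sort hM.eigenvalues
  have hr : hM.eigenvalues i = (hM.eigenvalues ∘ p) (p.symm i) := by simp [p]
  rw [hr]
  exact Tuple.monotone_sort hM.eigenvalues (by simp [Fin.le_def])

lemma le_eigUp_rev_zero {d : ℕ} {M : Matrix (Fin d) (Fin d) ℝ} (hM : M.IsHermitian)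
    (h0 : 0 < d) (i : Fin d) : hM.eigenvalues i ≤ eigUp M (Fin.rev ⟨0, h0⟩) := by
  rw [eigUp_eq' hM]
  set p := Tuple.sort hM.eigenvalues
  have hr : hM.eigenvalues i = (hM.eigenvalues ∘ p) (p.symm i) := by simp [p]
  rw [hr]
  refine Tuple.monotone_sort hM.eigenvalues ?_
  have := (p.symm i).isLt
  simp only [Fin.le_def, Fin.rev, Fin.val_mk]
  omega

end Helpers

/-- If `Ã := −(A + Aᵀ)` is positive definite, `D` is positive semidefinite, and the positive
semidefinite `σ` satisfies `Aσ + σAᵀ + D ≥ 0`, then the largest eigenvalue of `σ` satisfies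
`λ₁↓ ≤ δ₁↓ / α₁↑`. -/
theorem lyapunov_largest_eigenvalue_bound (n : ℕ) (hn : 1 ≤ n)
    (A D σ : Matrix (Fin (2*n)) (Fin (2*n)) ℝ)
    (hA : (-(A + Aᵀ)).PosDef) (hD : D.PosSemidef) (hσ : σ.PosSemidef)
    (hLyap : (A * σ + σ * Aᵀ + D).PosSemidef) :
    eigDown σ ⟨0, by omega⟩ ≤ eigDown D ⟨0, by omega⟩ / eigUp (-(A + Aᵀ)) ⟨0, by omega⟩ := by
  have h0 : 0 < 2 * n := by omega
  set At : Matrix (Fin (2*n)) (Fin (2*n)) ℝ := -(A + Aᵀ) with hAt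
  have hAtH : At.IsHermitian := hA.1
  have hDH : D.IsHermitian := hD.1
  have hσH : σ.IsHermitian := hσ.1
  set α : ℝ := eigUp At ⟨0, by omega⟩ with hαdef
  set δ : ℝ := eigDown D ⟨0, by omega⟩ with hδdef
  set lam : ℝ := eigDown σ ⟨0, by omega⟩ with hlamdef
  set i0 : Fin (2*n) := Tuple.sort hσH.eigenvalues (Fin.rev ⟨0, by omega⟩) with hi0
  have hlam : lam = hσH.eigenvalues i0 := by
    rw [hlamdef, eigDown, eigUp_eq' hσH]
  set v : Fin (2*n) → ℝ := ⇑(hσH.eigenvectorBasis i0) with hvdef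
  have hv : σ *ᵥ v = lam • v := by rw [hlam]; exact hσH.mulVec_eigenvectorBasis i0
  have hvv : v ⬝ᵥ v = 1 := by
    have h1 : ‖hσH.eigenvectorBasis i0‖ = 1 := hσH.eigenvectorBasis.orthonormal.1 i0
    have h2 := EuclideanSpace.inner_eq_star_dotProduct (𝕜 := ℝ)
      (hσH.eigenvectorBasis i0) (hσH.eigenvectorBasis i0)
    rw [real_inner_self_eq_norm_sq, h1] at h2
    simpa [hvdef] using h2.symm
  have hσt : σᵀ = σ := by
    ext i j
    have := congrFun (congrFun hσH.eq i) j
    simpa [Matrix.conjTranspose_apply] using this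
  have hAT : v ⬝ᵥ (Aᵀ *ᵥ v) = v ⬝ᵥ (A *ᵥ v) := by
    rw [dotProduct_mulVec, Matrix.vecMul_transpose, dotProduct_comm]
  have e1 : v ⬝ᵥ ((A * σ) *ᵥ v) = lam * (v ⬝ᵥ (A *ᵥ v)) := by
    rw [← Matrix.mulVec_mulVec, hv, Matrix.mulVec_smul, dotProduct_smul, smul_eq_mul]
  have e2 : v ⬝ᵥ ((σ * Aᵀ) *ᵥ v) = lam * (v ⬝ᵥ (A *ᵥ v)) := by
    rw [← Matrix.mulVec_mulVec, dotProduct_mulVec]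
    have hvσ : v ᵥ* σ = lam • v := by
      rw [← Matrix.mulVec_transpose, hσt, hv]
    rw [hvσ, smul_dotProduct, smul_eq_mul, hAT]
  have e3 : v ⬝ᵥ (At *ᵥ v) = -(2 * (v ⬝ᵥ (A *ᵥ v))) := by
    rw [hAt, Matrix.neg_mulVec, dotProduct_neg, Matrix.add_mulVec, dotProduct_add, hAT]
    ring
  have hq := hLyap.dotProduct_mulVec_nonneg v
  simp only [star_trivial, RCLike.re_to_real] at hq
  rw [Matrix.add_mulVec, Matrix.add_mulVec, dotProduct_add, dotProduct_add, e1, e2] at hq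
  have hαle : α ≤ v ⬝ᵥ (At *ᵥ v) := by
    have := herm_le_quad hAtH (c := α) (fun i => eigUp_zero_le hAtH h0 i) v
    rwa [hvv, mul_one] at this
  have hDle : v ⬝ᵥ (D *ᵥ v) ≤ δ := by
    have := herm_quad_le hDH (c := δ) (fun i => le_eigUp_rev_zero hDH h0 i) v
    rwa [hvv, mul_one] at this
  have hlam0 : 0 ≤ lam := by rw [hlam]; exact hσ.eigenvalues_nonneg i0
  have hα0 : 0 < α := by
    rw [hαdef, eigUp_eq' hAtH]
    exact hA.eigenvalues_pos _
  rw [le_div_iff₀ hα0]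
  have step1 : lam * α ≤ lam * (v ⬝ᵥ (At *ᵥ v)) :=
    mul_le_mul_of_nonneg_left hαle hlam0
  have step2 : lam * (v ⬝ᵥ (At *ᵥ v)) ≤ δ := by
    rw [e3]; linarith
  linarith
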